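/- The category SobLSS of topologically sober T₀ locally small spaces with bounded continuous maps, the category SpLocS of pairs (L, L_s) with L a spatial frame and L_s a sup-generating sublattice with zero (with special localic maps), and the opposite of the category SpFrmS of the same pairs with dominating compatible frame homomorphisms, are all equivalent categories. -/

import Mathlib

open Set TopologicalSpace CategoryTheory

universe u



/-! ### Frames: spectra -/

/-- The set of non-unit primes of a frame. -/
def SpecS (L : Type u) [Order.Frame L] : Set L :=
  {p | p ≠ ⊤ ∧ ∀ a b : L, p = a ⊓ b → p = a ∨ p = b}

/-- `DeltaS a = { p ∈ Spec L : a ≰ p }`. -/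
def DeltaS {L : Type u} [Order.Frame L] (a : L) : Set (SpecS L) :=
  {p | ¬ a ≤ (p : L)}

variable {L M N : Type u} [Order.Frame L] [Order.Frame M] [Order.Frame N]

lemma SpecS.inf_le {p : L} (hp : p ∈ SpecS L) {a b : L} (h : a ⊓ b ≤ p) :
    a ≤ p ∨ b ≤ p := by
  have h1 : p = (p ⊔ a) ⊓ (p ⊔ b) := by
    rw [← sup_inf_left, sup_eq_left.mpr h]
  rcases hp.2 _ _ h1 with h2 | h2
  · exact Or.inl (by rw [h2]; exact le_sup_right)
  · exact Or.inr (by rw [h2]; exact le_sup_right)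

lemma DeltaS_bot : DeltaS (⊥ : L) = ∅ := by
  ext p; simp [DeltaS]

lemma DeltaS_top : DeltaS (⊤ : L) = univ := by
  ext p; simpa [DeltaS, top_le_iff] using p.2.1

lemma DeltaS_inf (a b : L) : DeltaS (a ⊓ b) = DeltaS a ∩ DeltaS b := by
  ext p
  constructor
  · intro hp
    constructor <;> · intro hle; exact hp (le_trans (by simp) hle)
  · rintro ⟨h1, h2⟩ hle
    rcases SpecS.inf_le p.2 hle with h | h
    · exact h1 h
    · exact h2 h

lemma DeltaS_sup (a b : L) : DeltaS (a ⊔ b) = DeltaS a ∪ DeltaS b := by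
  ext p
  constructor
  · intro hp
    by_cases ha : a ≤ (p : L)
    · exact Or.inr fun hb => hp (sup_le ha hb)
    · exact Or.inl ha
  · rintro (h | h) hle
    · exact h (le_trans le_sup_left hle)
    · exact h (le_trans le_sup_right hle)

lemma DeltaS_sSup (S : Set L) : DeltaS (sSup S) = ⋃ a ∈ S, DeltaS a := by
  ext p
  simp only [DeltaS, mem_setOf_eq, mem_iUnion, sSup_le_iff, not_forall]

/-- The hull-kernel topology on the spectrum of a frame: the open sets are
exactly the sets of the form `DeltaS a`. -/
def specTop (L : Type u) [Order.Frame L] : TopologicalSpace (SpecS L) where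
  IsOpen U := U ∈ Set.range (DeltaS (L := L))
  isOpen_univ := ⟨⊤, DeltaS_top⟩
  isOpen_inter := by
    rintro _ _ ⟨a, rfl⟩ ⟨b, rfl⟩
    exact ⟨a ⊓ b, DeltaS_inf a b⟩
  isOpen_sUnion := by
    intro S hS
    refine ⟨sSup {a | DeltaS a ∈ S}, ?_⟩
    rw [DeltaS_sSup]
    apply Set.Subset.antisymm
    · intro p hp
      simp only [mem_iUnion] at hp ⊢
      obtain ⟨a, ha, hpa⟩ := hp
      exact ⟨_, ha, hpa⟩
    · intro p hp
      rcases hp with ⟨U, hU, hpU⟩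
      obtain ⟨a, rfl⟩ := hS U hU
      simp only [mem_iUnion]
      exact ⟨a, hU, hpU⟩

/-! ### Right Galois adjoints -/

/-- The right Galois adjoint of a map between complete lattices. -/
def rAdj [CompleteLattice M] [CompleteLattice L] (h : L → M) : M → L :=
  fun m => sSup {l | h l ≤ m}

lemma gc_rAdj (h : FrameHom L M) : GaloisConnection ⇑h (rAdj ⇑h) := by
  intro l m
  constructor
  · intro hl; exact le_sSup hl
  · intro hl
    calc h l ≤ h (rAdj (⇑h) m) := OrderHomClass.mono h hl
      _ ≤ m := by
          rw [rAdj, map_sSup]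
          apply sSup_le
          rintro _ ⟨l', hl', rfl⟩
          exact hl'

lemma rAdj_id : rAdj (id : L → L) = id := by
  funext m
  exact le_antisymm (sSup_le fun _ h => h) (le_sSup le_rfl)

lemma rAdj_mem_SpecS (h : FrameHom L M) {p : M} (hp : p ∈ SpecS M) :
    rAdj ⇑h p ∈ SpecS L := by
  have gc := gc_rAdj h
  constructor
  · intro htop
    apply hp.1
    rw [top_le_iff.symm]
    have : h ⊤ ≤ p := (gc ⊤ p).mpr (htop ▸ le_rfl)
    simpa using this
  · intro a b hab
    have hle : h a ⊓ h b ≤ p := by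
      rw [← map_inf]
      exact (gc _ p).mpr (le_of_eq hab.symm)
    have h1 : rAdj ⇑h p ≤ a := hab ▸ inf_le_left
    have h2 : rAdj ⇑h p ≤ b := hab ▸ inf_le_right
    rcases SpecS.inf_le hp hle with hc | hc
    · exact Or.inl (le_antisymm h1 ((gc a p).mp hc))
    · exact Or.inr (le_antisymm h2 ((gc b p).mp hc))

/-! ### Way-below, continuous and spatial frames -/

/-- `b` is way below `a`. -/
def WayBelow (b a : L) : Prop :=
  ∀ D : Set L, D.Nonempty → DirectedOn (· ≤ ·) D → a ≤ sSup D → ∃ d ∈ D, b ≤ d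

/-- A continuous frame. -/
def IsContinuousFrame (L : Type u) [Order.Frame L] : Prop :=
  ∀ a : L, a = sSup {b | WayBelow b a}

/-- A spatial frame: every element is a meet of primes. -/
def IsSpatialFrame (L : Type u) [Order.Frame L] : Prop :=
  ∀ a : L, ∃ T ⊆ SpecS L, a = sInf T

/-! ### Dominating and compatible homomorphisms -/

/-- `h` is dominating with respect to the designated sublattices. -/
def Dominating (sL : Set L) (sM : Set M) (h : L → M) : Prop :=
  ∀ m ∈ sM, ∃ l ∈ sL, h l ⊓ m = m

/-- `h` is compatible with respect to the designated sublattices. -/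
def Compatible (sL : Set L) (sM : Set M) (h : L → M) : Prop :=
  ∀ l ∈ sL, ∀ m ∈ sM, h l ⊓ m ∈ sM



/-! ### Locally small spaces -/

/-- A locally small space: a set together with a smopology. -/
structure LSS : Type (u + 1) where
  X : Type u
  L : Set (Set X)
  empty_mem : ∅ ∈ L
  inter_mem : ∀ {A B : Set X}, A ∈ L → B ∈ L → A ∩ B ∈ L
  union_mem : ∀ {A B : Set X}, A ∈ L → B ∈ L → A ∪ B ∈ L
  covers : ∀ x : X, ∃ A ∈ L, x ∈ A

namespace LSS

/-- The weakly open sets: unions of subfamilies of the smopology. -/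
def wo (S : LSS.{u}) : Set (Set S.X) := {U | ∃ F ⊆ S.L, U = ⋃₀ F}

lemma mem_wo_iff {S : LSS.{u}} {U : Set S.X} :
    U ∈ S.wo ↔ ∀ x ∈ U, ∃ A ∈ S.L, x ∈ A ∧ A ⊆ U := by
  constructor
  · rintro ⟨F, hF, rfl⟩ x hx
    obtain ⟨A, hA, hxA⟩ := hx
    exact ⟨A, hF hA, hxA, fun y hy => ⟨A, hA, hy⟩⟩
  · intro h
    refine ⟨{A | A ∈ S.L ∧ A ⊆ U}, fun A hA => hA.1, ?_⟩
    apply Set.Subset.antisymm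
    · intro x hx
      obtain ⟨A, hA, hxA, hAU⟩ := h x hx
      exact ⟨A, ⟨hA, hAU⟩, hxA⟩
    · rintro x ⟨A, ⟨_, hAU⟩, hxA⟩
      exact hAU hxA

lemma L_subset_wo (S : LSS.{u}) : S.L ⊆ S.wo := by
  intro A hA
  exact ⟨{A}, by simpa using hA, by simp⟩

/-- The topology of weakly open sets. -/
def top (S : LSS.{u}) : TopologicalSpace S.X where
  IsOpen U := U ∈ S.wo
  isOpen_univ := mem_wo_iff.mpr fun x _ => by
    obtain ⟨A, hA, hxA⟩ := S.covers x
    exact ⟨A, hA, hxA, subset_univ A⟩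
  isOpen_inter := by
    intro U V hU hV
    rw [mem_wo_iff] at hU hV ⊢
    rintro x ⟨hxU, hxV⟩
    obtain ⟨A, hA, hxA, hAU⟩ := hU x hxU
    obtain ⟨B, hB, hxB, hBV⟩ := hV x hxV
    exact ⟨A ∩ B, S.inter_mem hA hB, ⟨hxA, hxB⟩, inter_subset_inter hAU hBV⟩
  isOpen_sUnion := by
    intro F hF
    rw [mem_wo_iff]
    rintro x ⟨U, hU, hxU⟩
    obtain ⟨A, hA, hxA, hAU⟩ := mem_wo_iff.mp (hF U hU) x hxU
    exact ⟨A, hA, hxA, hAU.trans (subset_sUnion_of_mem hU)⟩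

/-- The frame of weakly open sets. -/
abbrev O (S : LSS.{u}) : Type u := @Opens S.X S.top

noncomputable instance (S : LSS.{u}) : Order.Frame S.O :=
  letI := S.top
  inferInstanceAs (Order.Frame (Opens S.X))

lemma isOpen_iff_mem_wo {S : LSS.{u}} {U : Set S.X} :
    @IsOpen _ S.top U ↔ U ∈ S.wo := Iff.rfl

/-- The exterior of a point: the union of all weakly open sets omitting it. -/
def extSet (S : LSS.{u}) (x : S.X) : Set S.X := ⋃₀ {U ∈ S.wo | x ∉ U}

lemma extSet_mem_wo (S : LSS.{u}) (x : S.X) : S.extSet x ∈ S.wo := by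
  rw [mem_wo_iff]
  rintro y ⟨U, ⟨hUwo, hxU⟩, hyU⟩
  obtain ⟨A, hA, hyA, hAU⟩ := mem_wo_iff.mp hUwo y hyU
  exact ⟨A, hA, hyA, hAU.trans (subset_sUnion_of_mem ⟨hUwo, hxU⟩)⟩

/-- The exterior of a point, as an open set. -/
def extO (S : LSS.{u}) (x : S.X) : S.O :=
  letI := S.top
  ⟨S.extSet x, S.extSet_mem_wo x⟩

end LSS

/-! ### Bounded and continuous maps -/

/-- `f` is a bounded map with respect to the given smopologies. -/
def IsBdd {X Y : Type*} (LX : Set (Set X)) (LY : Set (Set Y)) (f : X → Y) : Prop :=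
  ∀ W ∈ LX, ∃ V ∈ LY, W ⊆ f ⁻¹' V

/-- `f` is a continuous map of locally small spaces. -/
def IsCt {X Y : Type*} (LX : Set (Set X)) (LY : Set (Set Y)) (f : X → Y) : Prop :=
  ∀ V ∈ LY, ∀ W ∈ LX, f ⁻¹' V ∩ W ∈ LX



/-! ### Frames with designated sup-generating sublattices -/

/-- A frame together with a sup-generating sublattice with zero. -/
structure FrmS : Type (u + 1) where
  L : Type u
  [str : Order.Frame L]
  s : Set L
  bot_mem : ⊥ ∈ s
  inf_mem : ∀ {a b : L}, a ∈ s → b ∈ s → a ⊓ b ∈ s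
  sup_mem : ∀ {a b : L}, a ∈ s → b ∈ s → a ⊔ b ∈ s
  supGen : ∀ a : L, ∃ T ⊆ s, a = sSup T

attribute [instance] FrmS.str

variable {L M N : Type u} [Order.Frame L] [Order.Frame M] [Order.Frame N]

lemma Dominating.compFH {sL : Set L} {sM : Set M} {sN : Set N}
    (h : FrameHom L M) (k : FrameHom M N)
    (hd : Dominating sL sM ⇑h) (kd : Dominating sM sN ⇑k)
    (hc : Compatible sL sM ⇑h) : Dominating sL sN ⇑(k.comp h) := by
  intro n hn
  obtain ⟨m, hm, hkm⟩ := kd n hn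
  obtain ⟨l, hl, hhl⟩ := hd m hm
  refine ⟨l, hl, ?_⟩
  have h1 : (k.comp h) l ⊓ n = k (h l) ⊓ (k m ⊓ n) := by rw [hkm]; rfl
  rw [h1, ← inf_assoc, ← map_inf, hhl, hkm]

lemma Compatible.compFH {sL : Set L} {sM : Set M} {sN : Set N}
    (h : FrameHom L M) (k : FrameHom M N)
    (hcH : Compatible sL sM ⇑h) (kd : Dominating sM sN ⇑k)
    (kc : Compatible sM sN ⇑k) : Compatible sL sN ⇑(k.comp h) := by
  intro l hl n hn
  obtain ⟨m, hm, hkm⟩ := kd n hn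
  have h1 : h l ⊓ m ∈ sM := hcH l hl m hm
  have h2 : k (h l ⊓ m) ⊓ n ∈ sN := kc _ h1 n hn
  have h3 : k (h l ⊓ m) ⊓ n = (k.comp h) l ⊓ n := by
    rw [map_inf, inf_assoc, hkm]; rfl
  rwa [h3] at h2

lemma rAdj_comp (h : FrameHom L M) (k : FrameHom M N) :
    rAdj ⇑(k.comp h) = rAdj ⇑h ∘ rAdj ⇑k := by
  funext n
  exact (gc_rAdj (k.comp h)).u_unique ((gc_rAdj h).compose (gc_rAdj k))
    (fun a => rfl)

/-! ### The categories LSS, FrmSCat and LocS -/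

/-- Bounded continuous maps: the morphisms of `LSS`. -/
abbrev LSSHom (S T : LSS.{u}) : Type u :=
  {f : S.X → T.X // IsBdd S.L T.L f ∧ IsCt S.L T.L f}

instance : Category LSS.{u} where
  Hom := LSSHom
  id S := ⟨id, fun W hW => ⟨W, hW, fun _ hx => hx⟩,
    fun V hV W hW => S.inter_mem hV hW⟩
  comp {S T U} f g := ⟨g.1 ∘ f.1,
    fun W hW => by
      obtain ⟨V, hV, hWV⟩ := f.2.1 W hW
      obtain ⟨Z, hZ, hVZ⟩ := g.2.1 V hV
      exact ⟨Z, hZ, fun x hx => hVZ (hWV hx)⟩,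
    fun Z hZ W hW => by
      obtain ⟨V, hV, hWV⟩ := f.2.1 W hW
      have h1 : g.1 ⁻¹' Z ∩ V ∈ T.L := g.2.2 Z hZ V hV
      have h2 : f.1 ⁻¹' (g.1 ⁻¹' Z ∩ V) ∩ W ∈ S.L := f.2.2 _ h1 W hW
      have h3 : (g.1 ∘ f.1) ⁻¹' Z ∩ W = f.1 ⁻¹' (g.1 ⁻¹' Z ∩ V) ∩ W := by
        ext x
        constructor
        · rintro ⟨hxZ, hxW⟩; exact ⟨⟨hxZ, hWV hxW⟩, hxW⟩
        · rintro ⟨⟨hxZ, _⟩, hxW⟩; exact ⟨hxZ, hxW⟩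
      rw [h3]; exact h2⟩
  id_comp f := Subtype.ext rfl
  comp_id f := Subtype.ext rfl
  assoc f g h := Subtype.ext rfl

/-- The category of frames with sup-generating sublattices and dominating
compatible frame homomorphisms. -/
structure FrmSCat : Type (u + 1) where
  P : FrmS.{u}

/-- Dominating compatible frame homomorphisms: the morphisms of `FrmSCat`. -/
abbrev FrmSHom (A B : FrmSCat.{u}) : Type u :=
  {h : FrameHom A.P.L B.P.L //
    Dominating A.P.s B.P.s ⇑h ∧ Compatible A.P.s B.P.s ⇑h}

instance : Category FrmSCat.{u} where
  Hom := FrmSHom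
  id A := ⟨FrameHom.id _, fun m hm => ⟨m, hm, inf_idem m⟩,
    fun l hl m hm => A.P.inf_mem hl hm⟩
  comp {A B C} h k := ⟨k.1.comp h.1,
    Dominating.compFH h.1 k.1 h.2.1 k.2.1 h.2.2,
    Compatible.compFH h.1 k.1 h.2.2 k.2.1 k.2.2⟩
  id_comp f := Subtype.ext (by ext a; rfl)
  comp_id f := Subtype.ext (by ext a; rfl)
  assoc f g h := Subtype.ext (by ext a; rfl)

/-- The category of frames with sup-generating sublattices and special localic
maps (right Galois adjoints of dominating compatible frame homomorphisms). -/
structure LocS : Type (u + 1) where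
  P : FrmS.{u}

/-- Special localic maps: the morphisms of `LocS`. -/
abbrev LocSHom (A B : LocS.{u}) : Type u :=
  {g : A.P.L → B.P.L // ∃ h : FrameHom B.P.L A.P.L,
    Dominating B.P.s A.P.s ⇑h ∧ Compatible B.P.s A.P.s ⇑h ∧ g = rAdj ⇑h}

instance : Category LocS.{u} where
  Hom := LocSHom
  id A := ⟨id, FrameHom.id _, fun m hm => ⟨m, hm, inf_idem m⟩,
    fun l hl m hm => A.P.inf_mem hl hm, by
      have h1 : ⇑(FrameHom.id A.P.L) = (id : A.P.L → A.P.L) := rfl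
      rw [h1, rAdj_id]⟩
  comp {A B C} f g := ⟨g.1 ∘ f.1, by
    obtain ⟨h1, h1d, h1c, hf⟩ := f.2
    obtain ⟨h2, h2d, h2c, hg⟩ := g.2
    refine ⟨h1.comp h2, Dominating.compFH h2 h1 h2d h1d h2c,
      Compatible.compFH h2 h1 h2c h1d h1c, ?_⟩
    rw [hf, hg, rAdj_comp]⟩
  id_comp f := Subtype.ext rfl
  comp_id f := Subtype.ext rfl
  assoc f g h := Subtype.ext rfl

/-! ### The functor Ω : LSS ⥤ LocS -/

/-- The object part of `Ω`. -/
noncomputable abbrev OmegaObj (S : LSS.{u}) : FrmS.{u} where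
  L := S.O
  s := {U : S.O | (U : Set S.X) ∈ S.L}
  bot_mem := by
    letI := S.top
    show ((⊥ : Opens S.X) : Set S.X) ∈ S.L
    simpa using S.empty_mem
  inf_mem := by
    letI := S.top
    intro a b ha hb
    show ((a ⊓ b : Opens S.X) : Set S.X) ∈ S.L
    rw [Opens.coe_inf]
    exact S.inter_mem ha hb
  sup_mem := by
    letI := S.top
    intro a b ha hb
    show ((a ⊔ b : Opens S.X) : Set S.X) ∈ S.L
    rw [Opens.coe_sup]
    exact S.union_mem ha hb
  supGen := by
    letI := S.top
    intro U
    refine ⟨{V : Opens S.X | (V : Set S.X) ∈ S.L ∧ (V : Set S.X) ⊆ (U : Set S.X)},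
      fun V hV => hV.1, ?_⟩
    apply Opens.ext
    rw [Opens.coe_sSup]
    apply Set.Subset.antisymm
    · intro x hx
      obtain ⟨A, hA, hxA, hAU⟩ := LSS.mem_wo_iff.mp U.2 x hx
      exact Set.mem_biUnion (show (⟨A, S.L_subset_wo hA⟩ : Opens S.X) ∈ _ from ⟨hA, hAU⟩) hxA
    · intro x hx
      simp only [Set.mem_iUnion] at hx
      obtain ⟨V, ⟨⟨_, hVU⟩, hxV⟩⟩ := hx
      exact hVU hxV

lemma contW {S T : LSS.{u}} (f : S.X → T.X) (hc : IsCt S.L T.L f) :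
    @Continuous S.X T.X S.top T.top f := by
  letI := S.top; letI := T.top
  rw [continuous_def]
  intro V hV
  rw [LSS.isOpen_iff_mem_wo] at hV ⊢
  rw [LSS.mem_wo_iff]
  intro x hx
  obtain ⟨A, hA, hfA, hAV⟩ := LSS.mem_wo_iff.mp hV (f x) hx
  obtain ⟨W, hW, hxW⟩ := S.covers x
  exact ⟨f ⁻¹' A ∩ W, hc A hA W hW, ⟨hfA, hxW⟩, fun y hy => hAV hy.1⟩

/-- The preimage frame homomorphism `L^wo f` of a bounded continuous map. -/
noncomputable def preimFH {S T : LSS.{u}} (f : LSSHom S T) : FrameHom T.O S.O :=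
  @Opens.comap S.X T.X S.top T.top (@ContinuousMap.mk S.X T.X S.top T.top f.1 (contW f.1 f.2.2))

lemma preimFH_coe {S T : LSS.{u}} (f : LSSHom S T) (V : T.O) :
    ((preimFH f V : S.O) : Set S.X) = f.1 ⁻¹' (V : Set T.X) := by
  letI := S.top; letI := T.top
  exact Opens.coe_comap _ V

/-- The morphism part of `Ω`. -/
noncomputable def OmegaMap {S T : LSS.{u}} (f : LSSHom S T) :
    LocSHom ⟨OmegaObj S⟩ ⟨OmegaObj T⟩ :=
  ⟨rAdj ⇑(preimFH f), preimFH f,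
    by
      letI := S.top
      letI := T.top
      intro m hm
      obtain ⟨V, hV, hmV⟩ := f.2.1 (m : Set S.X) hm
      refine ⟨⟨V, T.L_subset_wo hV⟩, hV, ?_⟩
      apply Opens.ext
      show ((preimFH f ⟨V, _⟩ ⊓ m : Opens S.X) : Set S.X) = (m : Set S.X)
      rw [Opens.coe_inf, preimFH_coe]
      exact Set.inter_eq_self_of_subset_right hmV,
    by
      letI := S.top
      intro l hl m hm
      show ((preimFH f l ⊓ m : Opens S.X) : Set S.X) ∈ S.L
      rw [Opens.coe_inf, preimFH_coe]
      exact f.2.2 _ hl _ hm,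
    rfl⟩

lemma preimFH_id (S : LSS.{u}) : preimFH (𝟙 S) = FrameHom.id S.O := by
  apply DFunLike.ext
  intro V
  letI := S.top
  apply Opens.ext
  rw [preimFH_coe]
  rfl

lemma preimFH_comp {S T U : LSS.{u}} (f : S ⟶ T) (g : T ⟶ U) :
    preimFH (f ≫ g) = (preimFH f).comp (preimFH g) := by
  apply DFunLike.ext
  intro V
  letI := S.top
  apply Opens.ext
  rw [preimFH_coe]
  show _ = ((preimFH f (preimFH g V) : S.O) : Set S.X)
  rw [preimFH_coe, preimFH_coe]
  rfl

/-- The spectral functor `Ω : LSS ⥤ LocS`. -/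
noncomputable def Omega : LSS.{u} ⥤ LocS.{u} where
  obj S := ⟨OmegaObj S⟩
  map f := OmegaMap f
  map_id S := by
    apply Subtype.ext
    show rAdj ⇑(preimFH (𝟙 S)) = id
    rw [preimFH_id]
    have h1 : ⇑(FrameHom.id S.O) = (id : S.O → S.O) := rfl
    rw [h1, rAdj_id]
  map_comp {S T U} f g := by
    apply Subtype.ext
    show rAdj ⇑(preimFH (f ≫ g)) = rAdj ⇑(preimFH g) ∘ rAdj ⇑(preimFH f)
    rw [preimFH_comp, rAdj_comp]

/-! ### The functor Σ : LocS ⥤ LSS -/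

/-- The object part of `Σ`: the spectrum with the smopology `Δ(L_s)`. -/
abbrev SigmaObj (P : LocS.{u}) : LSS.{u} where
  X := ↥(SpecS P.P.L)
  L := DeltaS '' P.P.s
  empty_mem := ⟨⊥, P.P.bot_mem, DeltaS_bot⟩
  inter_mem := by
    rintro _ _ ⟨a, ha, rfl⟩ ⟨b, hb, rfl⟩
    exact ⟨a ⊓ b, P.P.inf_mem ha hb, DeltaS_inf a b⟩
  union_mem := by
    rintro _ _ ⟨a, ha, rfl⟩ ⟨b, hb, rfl⟩
    exact ⟨a ⊔ b, P.P.sup_mem ha hb, DeltaS_sup a b⟩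
  covers := by
    intro p
    obtain ⟨T, hT, hsup⟩ := P.P.supGen ⊤
    by_contra hcon
    push_neg at hcon
    apply p.2.1
    apply top_le_iff.mp
    rw [hsup]
    apply sSup_le
    intro a ha
    by_contra hle
    exact (hcon (DeltaS a) ⟨a, hT ha, rfl⟩) hle

/-- The morphism part of `Σ`: the restriction of a special localic map to the
spectra. -/
def SigmaMap {A B : LocS.{u}} (g : LocSHom A B) :
    LSSHom (SigmaObj A) (SigmaObj B) :=
  ⟨fun p => ⟨g.1 p.1, by
      obtain ⟨h, _, _, hg⟩ := g.2
      rw [hg]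
      exact rAdj_mem_SpecS h p.2⟩,
    by
      rintro _ ⟨a, ha, rfl⟩
      obtain ⟨h, hdom, hcomp, hg⟩ := g.2
      obtain ⟨l, hl, hla⟩ := hdom a ha
      refine ⟨DeltaS l, ⟨l, hl, rfl⟩, ?_⟩
      intro p hpa
      show ¬ l ≤ g.1 p.1
      intro hle
      rw [hg] at hle
      have h1 : h l ≤ (p : A.P.L) := (gc_rAdj h l p.1).mpr hle
      exact hpa (hla ▸ le_trans inf_le_left h1),
    by
      rintro _ ⟨d, hd, rfl⟩ _ ⟨e, he, rfl⟩
      obtain ⟨h, hdom, hcomp, hg⟩ := g.2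
      refine ⟨h d ⊓ e, hcomp d hd e he, ?_⟩
      ext p
      constructor
      · intro hle
        constructor
        · show ¬ d ≤ g.1 p.1
          intro hdg
          rw [hg] at hdg
          have h4 : h d ≤ (p : A.P.L) := (gc_rAdj h d p.1).mpr hdg
          exact hle (le_trans inf_le_left h4)
        · intro heg
          exact hle (le_trans inf_le_right heg)
      · rintro ⟨h1, h2⟩ hle
        rcases SpecS.inf_le p.2 hle with hc | hc
        · apply h1
          show d ≤ g.1 p.1
          rw [hg]
          exact (gc_rAdj h d p.1).mp hc
        · exact h2 hc⟩

/-- The spectral functor `Σ : LocS ⥤ LSS`. -/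
def SigmaF : LocS.{u} ⥤ LSS.{u} where
  obj P := SigmaObj P
  map g := SigmaMap g
  map_id A := Subtype.ext (funext fun p => Subtype.ext rfl)
  map_comp f g := Subtype.ext (funext fun p => Subtype.ext rfl)

/-! ### A Stone-type duality -/

/-- A `T₀` locally small space: the smopology separates points. -/
def SeparatesPoints' (S : LSS.{u}) : Prop :=
  ∀ x y : S.X, x ≠ y → ∃ V ∈ S.L, (x ∈ V ∧ y ∉ V) ∨ (y ∈ V ∧ x ∉ V)

/-- A topologically sober `T₀` locally small space (in this setting sobriety
includes the `T₀` separation property of the topology of weakly open sets). -/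
def IsSobLSS (S : LSS.{u}) : Prop :=
  SeparatesPoints' S ∧ @T0Space S.X S.top ∧ @QuasiSober S.X S.top

/-- The full subcategory of `LSS` of topologically sober `T₀` locally small
spaces. -/
abbrev SobLSS := ObjectProperty.FullSubcategory (fun S : LSS.{u} => IsSobLSS S)

/-- The full subcategory of `LocS` of pairs whose frame is spatial. -/
abbrev SpLocS := ObjectProperty.FullSubcategory (fun P : LocS.{u} => IsSpatialFrame P.P.L)

/-- The full subcategory of `FrmSCat` of pairs whose frame is spatial. -/
abbrev SpFrmS := ObjectProperty.FullSubcategory (fun P : FrmSCat.{u} => IsSpatialFrame P.P.L)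


/-! ### Auxiliary lemmas for the duality -/

section AuxAdj

variable {L M : Type u} [Order.Frame L] [Order.Frame M]

lemma rAdj_inj {h k : FrameHom L M} (e : rAdj ⇑h = rAdj ⇑k) : h = k :=
  DFunLike.ext _ _ fun _ =>
    (gc_rAdj h).l_unique (gc_rAdj k) (fun b => congrFun e b)

end AuxAdj

section SigmaTop

variable (P : LocS.{u})

lemma sigma_wo_iff {U : Set ↥(SpecS P.P.L)} :
    U ∈ (SigmaObj P).wo ↔ ∃ a : P.P.L, U = DeltaS a := by
  constructor
  · rintro ⟨F, hF, rfl⟩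
    refine ⟨sSup {b | b ∈ P.P.s ∧ DeltaS b ∈ F}, ?_⟩
    rw [DeltaS_sSup]
    apply Set.Subset.antisymm
    · rintro p ⟨V, hV, hpV⟩
      obtain ⟨b, hb, rfl⟩ := hF hV
      exact Set.mem_biUnion ⟨hb, hV⟩ hpV
    · rintro p hp
      simp only [Set.mem_iUnion] at hp
      obtain ⟨b, ⟨_, hbF⟩, hpb⟩ := hp
      exact ⟨DeltaS b, hbF, hpb⟩
  · rintro ⟨a, rfl⟩
    obtain ⟨T, hT, ha⟩ := P.P.supGen a
    refine ⟨DeltaS '' T, Set.image_mono hT, ?_⟩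
    rw [ha, DeltaS_sSup, Set.sUnion_image]

lemma sigma_isOpen_deltaS (a : P.P.L) :
    (SigmaObj P).top.IsOpen (DeltaS a) := (sigma_wo_iff P).mpr ⟨a, rfl⟩

lemma sigma_closure (p : ↥(SpecS P.P.L)) :
    @closure _ (SigmaObj P).top {p} = {q : ↥(SpecS P.P.L) | (p : P.P.L) ≤ (q : P.P.L)} := by
  letI := (SigmaObj P).top
  ext q
  rw [mem_closure_iff]
  constructor
  · intro h
    by_contra hpq
    obtain ⟨r, hr1, hr2⟩ := h (DeltaS (p : P.P.L)) (sigma_isOpen_deltaS P _) hpq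
    rw [Set.mem_singleton_iff] at hr2
    subst hr2
    exact hr1 le_rfl
  · intro hpq o ho hqo
    obtain ⟨a, rfl⟩ := (sigma_wo_iff P).mp ho
    refine ⟨p, ?_, rfl⟩
    intro hap
    exact hqo (hap.trans hpq)

lemma sigma_t0 : @T0Space _ (SigmaObj P).top := by
  letI := (SigmaObj P).top
  rw [t0Space_iff_inseparable]
  intro x y h
  rw [inseparable_iff_closure_eq, sigma_closure P x, sigma_closure P y] at h
  have hxy : (x : P.P.L) ≤ (y : P.P.L) := (Set.ext_iff.mp h y).mpr le_rfl
  have hyx : (y : P.P.L) ≤ (x : P.P.L) := (Set.ext_iff.mp h x).mp le_rfl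
  exact Subtype.ext (le_antisymm hxy hyx)

lemma sigma_quasiSober : @QuasiSober _ (SigmaObj P).top := by
  letI := (SigmaObj P).top
  constructor
  intro S hS hS'
  obtain ⟨a, ha⟩ : ∃ a, Sᶜ = DeltaS a := (sigma_wo_iff P).mp hS'.isOpen_compl
  have haS : ∀ q : ↥(SpecS P.P.L), q ∈ S ↔ a ≤ (q : P.P.L) := by
    intro q
    constructor
    · intro hq
      by_contra hnot
      have : q ∈ Sᶜ := ha ▸ hnot
      exact this hq
    · intro hq
      by_contra hnot
      have : q ∈ DeltaS a := ha ▸ hnot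
      exact this hq
  set c : P.P.L := sInf (Subtype.val '' S) with hc_def
  have hc_le : ∀ q ∈ S, c ≤ (q : P.P.L) := fun q hq => sInf_le ⟨q, hq, rfl⟩
  have hac : a ≤ c := le_sInf (by rintro _ ⟨q, hq, rfl⟩; exact (haS q).mp hq)
  have hSc : ∀ q : ↥(SpecS P.P.L), q ∈ S ↔ c ≤ (q : P.P.L) :=
    fun q => ⟨hc_le q, fun h => (haS q).mpr (hac.trans h)⟩
  obtain ⟨q0, hq0⟩ := hS.1
  have hc : c ∈ SpecS P.P.L := by
    constructor
    · intro htop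
      exact q0.2.1 (top_le_iff.mp (htop ▸ hc_le q0 hq0))
    · intro u v he
      by_contra hboth
      push_neg at hboth
      have hcu : c ≤ u := he ▸ inf_le_left
      have hcv : c ≤ v := he ▸ inf_le_right
      have hu : ¬ u ≤ c := fun h => hboth.1 (le_antisymm hcu h)
      have hv : ¬ v ≤ c := fun h => hboth.2 (le_antisymm hcv h)
      have h1 : ∃ q ∈ S, ¬ u ≤ (q : P.P.L) := by
        by_contra hcon
        push_neg at hcon
        exact hu (le_sInf (by rintro _ ⟨q, hq, rfl⟩; exact hcon q hq))
      have h2 : ∃ q ∈ S, ¬ v ≤ (q : P.P.L) := by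
        by_contra hcon
        push_neg at hcon
        exact hv (le_sInf (by rintro _ ⟨q, hq, rfl⟩; exact hcon q hq))
      obtain ⟨q1, hq1S, hq1⟩ := h1
      obtain ⟨q2, hq2S, hq2⟩ := h2
      obtain ⟨q, hqS, hqu, hqv⟩ := hS.2 (DeltaS u) (DeltaS v)
        (sigma_isOpen_deltaS P u) (sigma_isOpen_deltaS P v)
        ⟨q1, hq1S, hq1⟩ ⟨q2, hq2S, hq2⟩
      have : ¬ u ⊓ v ≤ (q : P.P.L) := by
        intro hle
        rcases SpecS.inf_le q.2 hle with h | h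
        · exact hqu h
        · exact hqv h
      exact this (he ▸ hc_le q hqS)
  refine ⟨⟨c, hc⟩, ?_⟩
  show @closure _ (SigmaObj P).top {(⟨c, hc⟩ : ↥(SpecS P.P.L))} = S
  rw [sigma_closure]
  ext q
  exact (hSc q).symm

lemma sigma_sep : SeparatesPoints' (SigmaObj P) := by
  intro x y hxy
  have hor : ¬ (x : P.P.L) ≤ (y : P.P.L) ∨ ¬ (y : P.P.L) ≤ (x : P.P.L) := by
    by_contra h
    push_neg at h
    exact hxy (Subtype.ext (le_antisymm h.1 h.2))
  rcases hor with h | h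
  · obtain ⟨T, hT, hx⟩ := P.P.supGen (x : P.P.L)
    have : ∃ b ∈ T, ¬ b ≤ (y : P.P.L) := by
      by_contra hcon
      push_neg at hcon
      exact h (hx ▸ sSup_le hcon)
    obtain ⟨b, hbT, hby⟩ := this
    exact ⟨DeltaS b, ⟨b, hT hbT, rfl⟩,
      Or.inr ⟨hby, fun hxb => hxb (hx ▸ le_sSup hbT)⟩⟩
  · obtain ⟨T, hT, hy⟩ := P.P.supGen (y : P.P.L)
    have : ∃ b ∈ T, ¬ b ≤ (x : P.P.L) := by
      by_contra hcon
      push_neg at hcon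
      exact h (hy ▸ sSup_le hcon)
    obtain ⟨b, hbT, hbx⟩ := this
    exact ⟨DeltaS b, ⟨b, hT hbT, rfl⟩,
      Or.inl ⟨hbx, fun hyb => hyb (hy ▸ le_sSup hbT)⟩⟩

lemma sigma_isSob : IsSobLSS (SigmaObj P) :=
  ⟨sigma_sep P, sigma_t0 P, sigma_quasiSober P⟩

end SigmaTop


section OmegaSpatial

variable (S : LSS.{u})

lemma not_mem_extSet_self (x : S.X) : x ∉ S.extSet x := by
  rintro ⟨U, ⟨_, hxU⟩, hxU'⟩
  exact hxU hxU'

lemma subset_extSet {U : Set S.X} (hU : U ∈ S.wo) {x : S.X} (hx : x ∉ U) :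
    U ⊆ S.extSet x :=
  subset_sUnion_of_mem ⟨hU, hx⟩

lemma extO_mem_SpecS (x : S.X) : S.extO x ∈ SpecS S.O := by
  letI := S.top
  constructor
  · intro h
    apply not_mem_extSet_self S x
    have hco : S.extSet x = (univ : Set S.X) := by
      have h2 := congrArg (fun U : S.O => (U : Set S.X)) h
      simp only [Opens.coe_top] at h2
      exact h2
    rw [hco]
    exact Set.mem_univ x
  · intro A B hAB
    have hco : S.extSet x = (A : Set S.X) ∩ (B : Set S.X) := by
      have h2 := congrArg (fun U : S.O => (U : Set S.X)) hAB
      simp only [Opens.coe_inf] at h2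
      exact h2
    have hx' : x ∉ (A : Set S.X) ∩ (B : Set S.X) :=
      hco ▸ not_mem_extSet_self S x
    by_cases hxA : x ∈ (A : Set S.X)
    · have hxB : x ∉ (B : Set S.X) := fun h => hx' ⟨hxA, h⟩
      right
      apply Opens.ext
      apply Set.Subset.antisymm
      · show S.extSet x ⊆ (B : Set S.X)
        rw [hco]; exact Set.inter_subset_right
      · exact subset_extSet S B.2 hxB
    · left
      apply Opens.ext
      apply Set.Subset.antisymm
      · show S.extSet x ⊆ (A : Set S.X)
        rw [hco]; exact Set.inter_subset_left
      · exact subset_extSet S A.2 hxA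

lemma omega_spatial : IsSpatialFrame S.O := by
  letI := S.top
  intro U
  refine ⟨S.extO '' {x | x ∉ (U : Set S.X)}, ?_, ?_⟩
  · rintro _ ⟨x, _, rfl⟩
    exact extO_mem_SpecS S x
  · apply le_antisymm
    · apply le_sInf
      rintro _ ⟨x, hx, rfl⟩
      show U ≤ S.extO x
      rw [← SetLike.coe_subset_coe]
      exact subset_extSet S U.2 hx
    · intro y hy
      by_contra hyU
      have h1 : sInf (S.extO '' {x | x ∉ (U : Set S.X)}) ≤ S.extO y :=
        sInf_le ⟨y, hyU, rfl⟩
      exact not_mem_extSet_self S y (h1 hy)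

end OmegaSpatial

section Eta

variable (S : LSS.{u})

noncomputable def etaFun (x : S.X) : ↥(SpecS S.O) :=
  ⟨S.extO x, extO_mem_SpecS S x⟩

lemma extSet_eq_compl_closure (x : S.X) :
    S.extSet x = (@closure _ S.top {x})ᶜ := by
  letI := S.top
  apply Set.Subset.antisymm
  · rintro y ⟨U, ⟨hU, hxU⟩, hyU⟩ hyc
    rw [mem_closure_iff] at hyc
    obtain ⟨z, hzU, hz⟩ := hyc U hU hyU
    rw [Set.mem_singleton_iff] at hz
    subst hz
    exact hxU hzU
  · intro y hy
    refine subset_extSet S ?_ ?_ hy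
    · exact (isOpen_compl_iff.mpr isClosed_closure : IsOpen (closure {x})ᶜ)
    · intro hx
      exact hx (subset_closure rfl)

lemma eta_mem (U : S.O) (x : S.X) :
    etaFun S x ∈ DeltaS U ↔ x ∈ (U : Set S.X) := by
  letI := S.top
  constructor
  · intro h
    by_contra hx
    apply h
    show U ≤ S.extO x
    rw [← SetLike.coe_subset_coe]
    exact subset_extSet S U.2 hx
  · intro hx h
    exact not_mem_extSet_self S x (h hx)

noncomputable def etaHom : LSSHom S (SigmaObj ⟨OmegaObj S⟩) := by
  letI := S.top
  refine ⟨etaFun S, ?_, ?_⟩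
  · intro W hW
    refine ⟨DeltaS (⟨W, S.L_subset_wo hW⟩ : S.O),
      ⟨⟨W, S.L_subset_wo hW⟩, hW, rfl⟩, ?_⟩
    intro x hx
    exact (eta_mem S _ x).mpr hx
  · rintro _ ⟨U, hU, rfl⟩ W hW
    have hpre : etaFun S ⁻¹' (DeltaS U) = (U : Set S.X) :=
      Set.ext fun x => eta_mem S U x
    rw [hpre]
    exact S.inter_mem hU hW

lemma eta_injective (hS : IsSobLSS S) : Function.Injective (etaFun S) := by
  letI := S.top
  haveI := hS.2.1
  intro x y h
  have h1 : S.extSet x = S.extSet y :=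
    congrArg (fun p : ↥(SpecS S.O) => ((p : S.O) : Set S.X)) h
  rw [extSet_eq_compl_closure, extSet_eq_compl_closure] at h1
  have h2 : closure ({x} : Set S.X) = closure {y} := compl_injective h1
  exact (inseparable_iff_closure_eq.mpr h2).eq

lemma eta_surjective (hS : IsSobLSS S) : Function.Surjective (etaFun S) := by
  letI := S.top
  haveI := hS.2.2
  intro p
  set Uo : S.O := (p : S.O) with hUo
  have hC_closed : IsClosed ((Uo : Set S.X)ᶜ) := isClosed_compl_iff.mpr Uo.2
  have hC_ne : ((Uo : Set S.X)ᶜ).Nonempty := by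
    rw [Set.nonempty_compl]
    intro h
    exact p.2.1 (Opens.ext (by rw [h]; rfl))
  have hC_pre : IsPreirreducible ((Uo : Set S.X)ᶜ) := by
    rintro u v hu hv ⟨y1, hy1C, hy1u⟩ ⟨y2, hy2C, hy2v⟩
    by_contra hne
    rw [Set.not_nonempty_iff_eq_empty] at hne
    have hsub : u ∩ v ⊆ (Uo : Set S.X) := by
      intro z hz
      by_contra hzU
      exact absurd hne (Set.nonempty_iff_ne_empty.mp ⟨z, hzU, hz⟩)
    have hle : (⟨u, hu⟩ ⊓ ⟨v, hv⟩ : S.O) ≤ Uo := by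
      rw [← SetLike.coe_subset_coe]
      exact hsub
    rcases SpecS.inf_le p.2 hle with h | h
    · exact hy1C (h hy1u)
    · exact hy2C (h hy2v)
  obtain ⟨x, hx⟩ := QuasiSober.sober ⟨hC_ne, hC_pre⟩ hC_closed
  refine ⟨x, Subtype.ext (Opens.ext ?_)⟩
  show S.extSet x = (Uo : Set S.X)
  rw [extSet_eq_compl_closure, hx, compl_compl]

noncomputable def etaEquiv (hS : IsSobLSS S) : S.X ≃ ↥(SpecS S.O) :=
  Equiv.ofBijective (etaFun S) ⟨eta_injective S hS, eta_surjective S hS⟩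

lemma eta_symm_preimage (hS : IsSobLSS S) (U : S.O) :
    (etaEquiv S hS).symm ⁻¹' (U : Set S.X) = DeltaS U := by
  letI := S.top
  ext p
  show (etaEquiv S hS).symm p ∈ (U : Set S.X) ↔ _
  rw [← eta_mem S U ((etaEquiv S hS).symm p)]
  have : etaFun S ((etaEquiv S hS).symm p) = p :=
    (etaEquiv S hS).apply_symm_apply p
  rw [this]

noncomputable def etaInvHom (hS : IsSobLSS S) :
    LSSHom (SigmaObj ⟨OmegaObj S⟩) S := by
  letI := S.top
  refine ⟨(etaEquiv S hS).symm, ?_, ?_⟩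
  · rintro _ ⟨U, hU, rfl⟩
    refine ⟨(U : Set S.X), hU, ?_⟩
    rw [eta_symm_preimage S hS U]
  · intro V hV W hW
    obtain ⟨U, hU, rfl⟩ := hW
    have h1 : (etaEquiv S hS).symm ⁻¹' V = DeltaS (⟨V, S.L_subset_wo hV⟩ : S.O) :=
      eta_symm_preimage S hS ⟨V, S.L_subset_wo hV⟩
    rw [h1, ← DeltaS_inf]
    refine ⟨(⟨V, S.L_subset_wo hV⟩ : S.O) ⊓ U, ?_, rfl⟩
    show (((⟨V, S.L_subset_wo hV⟩ : S.O) ⊓ U : S.O) : Set S.X) ∈ S.L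
    rw [Opens.coe_inf]
    exact S.inter_mem hV hU

lemma eta_nat_key {S T : LSS.{u}} (f : LSSHom S T) (x : S.X) :
    rAdj ⇑(preimFH f) (S.extO x) = T.extO (f.1 x) := by
  letI := S.top
  letI := T.top
  apply le_antisymm
  · apply sSup_le
    intro V hV
    show V ≤ T.extO (f.1 x)
    rw [← SetLike.coe_subset_coe]
    rw [show (T.extO (f.1 x) : Set T.X) = T.extSet (f.1 x) from rfl,
      extSet_eq_compl_closure]
    intro y hyV hyc
    rw [mem_closure_iff] at hyc
    obtain ⟨z, hzV, hz⟩ := hyc V V.2 hyV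
    rw [Set.mem_singleton_iff] at hz
    subst hz
    have hx' : x ∈ (preimFH f V : Set S.X) := by
      rw [preimFH_coe]
      exact hzV
    exact not_mem_extSet_self S x (hV hx')
  · apply le_sSup
    show preimFH f (T.extO (f.1 x)) ≤ S.extO x
    rw [← SetLike.coe_subset_coe]
    have hnx : x ∉ (preimFH f (T.extO (f.1 x)) : Set S.X) := by
      rw [preimFH_coe]
      exact fun h => not_mem_extSet_self T (f.1 x) h
    exact subset_extSet S (preimFH f (T.extO (f.1 x))).2 hnx

end Eta


section Counit

variable (A : LocS.{u})

/-- `DeltaS a` as an open set of the spectrum. -/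
noncomputable def deltaO (a : A.P.L) : (SigmaObj A).O :=
  @Opens.mk _ (SigmaObj A).top (DeltaS a) (sigma_isOpen_deltaS A a)

/-- `DeltaS` as a frame homomorphism into the opens of the spectrum. -/
noncomputable def deltaFH : FrameHom A.P.L (SigmaObj A).O where
  toFun := deltaO A
  map_inf' a b := by
    letI := (SigmaObj A).top
    apply Opens.ext
    rw [Opens.coe_inf]
    exact DeltaS_inf a b
  map_top' := by
    letI := (SigmaObj A).top
    apply Opens.ext
    rw [Opens.coe_top]
    exact DeltaS_top
  map_sSup' s := by
    letI := (SigmaObj A).top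
    apply Opens.ext
    rw [Opens.coe_sSup]
    ext p
    constructor
    · intro hp
      have hp' : p ∈ DeltaS (sSup s) := hp
      rw [DeltaS_sSup] at hp'
      simp only [Set.mem_iUnion] at hp'
      obtain ⟨a, ha, hpa⟩ := hp'
      simp only [Set.mem_iUnion]
      exact ⟨deltaO A a, ⟨a, ha, rfl⟩, hpa⟩
    · intro hp
      simp only [Set.mem_iUnion] at hp
      obtain ⟨U, ⟨a, ha, rfl⟩, hpa⟩ := hp
      show p ∈ DeltaS (sSup s)
      rw [DeltaS_sSup]
      simp only [Set.mem_iUnion]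
      exact ⟨a, ha, hpa⟩

lemma deltaFH_coe (a : A.P.L) : ((deltaFH A a : (SigmaObj A).O) : Set _) = DeltaS a := rfl

lemma deltaFH_le_iff (hA : IsSpatialFrame A.P.L) {a b : A.P.L} :
    deltaFH A a ≤ deltaFH A b ↔ a ≤ b := by
  letI := (SigmaObj A).top
  constructor
  · intro h
    obtain ⟨T, hT, hb⟩ := hA b
    rw [hb]
    apply le_sInf
    intro t ht
    have hbt : b ≤ t := hb ▸ sInf_le ht
    by_contra hat
    have h1 : (⟨t, hT ht⟩ : ↥(SpecS A.P.L)) ∈ DeltaS a := hat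
    have h2 := (SetLike.coe_subset_coe.mpr h) h1
    rw [deltaFH_coe] at h2
    exact h2 hbt
  · intro h
    exact OrderHomClass.mono (deltaFH A) h

lemma deltaFH_inj (hA : IsSpatialFrame A.P.L) : Function.Injective (deltaFH A) :=
  fun a b h => le_antisymm
    ((deltaFH_le_iff A hA).mp h.le) ((deltaFH_le_iff A hA).mp h.ge)

lemma deltaFH_surj : Function.Surjective (deltaFH A) := by
  letI := (SigmaObj A).top
  intro U
  obtain ⟨a, ha⟩ := (sigma_wo_iff A).mp U.2
  exact ⟨a, Opens.ext ha.symm⟩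

lemma rAdj_deltaFH_apply (hA : IsSpatialFrame A.P.L) (a : A.P.L) :
    rAdj ⇑(deltaFH A) (deltaFH A a) = a := by
  apply le_antisymm
  · apply sSup_le
    intro b hb
    exact (deltaFH_le_iff A hA).mp hb
  · exact le_sSup (show deltaFH A a ≤ deltaFH A a from le_rfl)

lemma deltaFH_rAdj_apply (U : (SigmaObj A).O) :
    deltaFH A (rAdj ⇑(deltaFH A) U) = U := by
  obtain ⟨a, rfl⟩ := deltaFH_surj A U
  exact (gc_rAdj (deltaFH A)).l_u_l_eq_l a

/-- The inverse of `deltaFH` as a frame homomorphism, for spatial frames. -/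
noncomputable def epsFH (hA : IsSpatialFrame A.P.L) :
    FrameHom (SigmaObj A).O A.P.L where
  toFun := rAdj ⇑(deltaFH A)
  map_inf' U V := by
    apply deltaFH_inj A hA
    rw [map_inf, deltaFH_rAdj_apply, deltaFH_rAdj_apply, deltaFH_rAdj_apply]
  map_top' := by
    apply deltaFH_inj A hA
    rw [map_top, deltaFH_rAdj_apply]
  map_sSup' s := by
    apply deltaFH_inj A hA
    rw [deltaFH_rAdj_apply, map_sSup, Set.image_image]
    have : (fun U => deltaFH A (rAdj ⇑(deltaFH A) U)) '' s = s := by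
      rw [show (fun U => deltaFH A (rAdj ⇑(deltaFH A) U)) = fun U => U from
        funext fun U => deltaFH_rAdj_apply A U]
      exact Set.image_id' s
    rw [this]

lemma epsFH_coe (hA : IsSpatialFrame A.P.L) :
    ⇑(epsFH A hA) = rAdj ⇑(deltaFH A) := rfl

lemma deltaFH_dominating :
    Dominating A.P.s (OmegaObj (SigmaObj A)).s ⇑(deltaFH A) := by
  letI := (SigmaObj A).top
  rintro U hU
  obtain ⟨a, ha, haU⟩ := hU
  refine ⟨a, ha, ?_⟩
  apply Opens.ext
  show (DeltaS a) ∩ (U : Set _) = (U : Set _)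
  rw [haU]
  exact Set.inter_self _

lemma deltaFH_compatible :
    Compatible A.P.s (OmegaObj (SigmaObj A)).s ⇑(deltaFH A) := by
  letI := (SigmaObj A).top
  rintro l hl U hU
  obtain ⟨a, ha, haU⟩ := hU
  refine ⟨l ⊓ a, A.P.inf_mem hl ha, ?_⟩
  show DeltaS (l ⊓ a) = ((deltaFH A l ⊓ U : (SigmaObj A).O) : Set _)
  rw [Opens.coe_inf, deltaFH_coe, DeltaS_inf, haU]

lemma epsFH_dominating (hA : IsSpatialFrame A.P.L) :
    Dominating (OmegaObj (SigmaObj A)).s A.P.s ⇑(epsFH A hA) := by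
  intro m hm
  refine ⟨deltaFH A m, ⟨m, hm, rfl⟩, ?_⟩
  rw [epsFH_coe, rAdj_deltaFH_apply A hA, inf_idem]

lemma epsFH_compatible (hA : IsSpatialFrame A.P.L) :
    Compatible (OmegaObj (SigmaObj A)).s A.P.s ⇑(epsFH A hA) := by
  letI := (SigmaObj A).top
  rintro U hU m hm
  obtain ⟨a, ha, haU⟩ := hU
  have hUa : U = deltaFH A a := Opens.ext haU.symm
  rw [hUa, epsFH_coe, rAdj_deltaFH_apply A hA]
  exact A.P.inf_mem ha hm

/-- The counit component as a special localic map. -/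
noncomputable def epsHom (hA : IsSpatialFrame A.P.L) :
    LocSHom ⟨OmegaObj (SigmaObj A)⟩ A :=
  ⟨rAdj ⇑(deltaFH A), deltaFH A, deltaFH_dominating A, deltaFH_compatible A, rfl⟩

/-- The inverse counit component. -/
noncomputable def epsInvHom (hA : IsSpatialFrame A.P.L) :
    LocSHom A ⟨OmegaObj (SigmaObj A)⟩ :=
  ⟨rAdj ⇑(epsFH A hA), epsFH A hA, epsFH_dominating A hA, epsFH_compatible A hA, rfl⟩

lemma eps_hom_inv (hA : IsSpatialFrame A.P.L) :
    rAdj ⇑(epsFH A hA) ∘ rAdj ⇑(deltaFH A) = id := by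
  have h1 : (deltaFH A).comp (epsFH A hA) = FrameHom.id _ :=
    DFunLike.ext _ _ fun U => deltaFH_rAdj_apply A U
  have h2 := rAdj_comp (epsFH A hA) (deltaFH A)
  rw [h1] at h2
  have h3 : ⇑(FrameHom.id ((SigmaObj A).O)) = (id : (SigmaObj A).O → (SigmaObj A).O) := rfl
  rw [h3, rAdj_id] at h2
  exact h2.symm

lemma eps_inv_hom (hA : IsSpatialFrame A.P.L) :
    rAdj ⇑(deltaFH A) ∘ rAdj ⇑(epsFH A hA) = id := by
  have h1 : (epsFH A hA).comp (deltaFH A) = FrameHom.id _ :=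
    DFunLike.ext _ _ fun a => rAdj_deltaFH_apply A hA a
  have h2 := rAdj_comp (deltaFH A) (epsFH A hA)
  rw [h1] at h2
  have h3 : ⇑(FrameHom.id (A.P.L)) = (id : A.P.L → A.P.L) := rfl
  rw [h3, rAdj_id] at h2
  exact h2.symm

lemma eps_nat_key {A B : LocS.{u}} (g : LocSHom A B) (h : FrameHom B.P.L A.P.L)
    (hg : g.1 = rAdj ⇑h) :
    (preimFH (SigmaMap g)).comp (deltaFH B) = (deltaFH A).comp h := by
  letI := (SigmaObj A).top
  letI := (SigmaObj B).top
  apply DFunLike.ext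
  intro b
  apply Opens.ext
  show ((preimFH (SigmaMap g) (deltaFH B b) : (SigmaObj A).O) : Set _) = DeltaS (h b)
  rw [preimFH_coe]
  ext q
  show ¬ b ≤ (g.1 q.1) ↔ ¬ h b ≤ q.1
  rw [hg]
  exact not_congr (gc_rAdj h b q.1).symm

end Counit


/-! ### The equivalence between SobLSS and SpLocS -/

/-- The restriction of `Ω` to the full subcategories. -/
noncomputable def FOm : SobLSS.{u} ⥤ SpLocS.{u} :=
  ObjectProperty.lift _ (ObjectProperty.ι _ ⋙ Omega)
    (fun S => omega_spatial S.obj)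

/-- The restriction of `Σ` to the full subcategories. -/
noncomputable def GSi : SpLocS.{u} ⥤ SobLSS.{u} :=
  ObjectProperty.lift _ (ObjectProperty.ι _ ⋙ SigmaF)
    (fun A => sigma_isSob A.obj)

/-- The unit isomorphism components. -/
noncomputable def etaIso (S : SobLSS.{u}) : S ≅ (FOm ⋙ GSi).obj S where
  hom := ⟨etaHom S.obj⟩
  inv := ⟨etaInvHom S.obj S.property⟩
  hom_inv_id := InducedCategory.hom_ext (Subtype.ext (funext fun x =>
    (etaEquiv S.obj S.property).symm_apply_apply x))
  inv_hom_id := InducedCategory.hom_ext (Subtype.ext (funext fun p =>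
    (etaEquiv S.obj S.property).apply_symm_apply p))

/-- The unit isomorphism. -/
noncomputable def unitIsoSob : 𝟭 SobLSS.{u} ≅ FOm ⋙ GSi :=
  NatIso.ofComponents etaIso (fun {X Y} f => by
    apply InducedCategory.hom_ext
    apply Subtype.ext
    funext x
    apply Subtype.ext
    exact (eta_nat_key f.hom x).symm)

/-- The counit isomorphism components. -/
noncomputable def epsIso (A : SpLocS.{u}) : (GSi ⋙ FOm).obj A ≅ A where
  hom := ⟨epsHom A.obj A.property⟩
  inv := ⟨epsInvHom A.obj A.property⟩
  hom_inv_id := InducedCategory.hom_ext (Subtype.ext (eps_hom_inv A.obj A.property))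
  inv_hom_id := InducedCategory.hom_ext (Subtype.ext (eps_inv_hom A.obj A.property))

/-- The counit isomorphism. -/
noncomputable def counitIsoSob : GSi ⋙ FOm ≅ 𝟭 SpLocS.{u} :=
  NatIso.ofComponents epsIso (fun {A B} g => by
    apply InducedCategory.hom_ext
    apply Subtype.ext
    obtain ⟨h, hdom, hcomp, hg⟩ := g.hom.2
    show rAdj ⇑(deltaFH B.obj) ∘ rAdj ⇑(preimFH (SigmaMap g.hom)) =
      g.hom.1 ∘ rAdj ⇑(deltaFH A.obj)
    rw [← rAdj_comp (deltaFH B.obj) (preimFH (SigmaMap g.hom)), eps_nat_key g.hom h hg,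
      rAdj_comp h (deltaFH A.obj), ← hg])

/-- The equivalence between topologically sober T₀ locally small spaces and
spatial frames with sup-generating sublattices (with special localic maps). -/
noncomputable def eqSobSpLoc : SobLSS.{u} ≌ SpLocS.{u} :=
  CategoryTheory.Equivalence.mk FOm GSi unitIsoSob counitIsoSob

/-! ### The equivalence between SpLocS and SpFrmSᵒᵖ -/

/-- From localic maps to (opposite) frame homomorphisms, using the uniqueness
of left Galois adjoints. -/
noncomputable def Jfun : SpLocS.{u} ⥤ (SpFrmS.{u})ᵒᵖ where
  obj A := Opposite.op ⟨⟨A.obj.P⟩, A.property⟩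
  map {A B} g :=
    Quiver.Hom.op (⟨⟨g.hom.2.choose, g.hom.2.choose_spec.1, g.hom.2.choose_spec.2.1⟩⟩ :
      (⟨⟨B.obj.P⟩, B.property⟩ : SpFrmS.{u}) ⟶ ⟨⟨A.obj.P⟩, A.property⟩)
  map_id A := by
    have hc : (𝟙 A : A ⟶ A).hom.2.choose = FrameHom.id A.obj.P.L := by
      apply rAdj_inj
      rw [← (𝟙 A : A ⟶ A).hom.2.choose_spec.2.2]
      show (𝟙 A : A ⟶ A).hom.1 = rAdj ⇑(FrameHom.id A.obj.P.L)
      have h1 : ⇑(FrameHom.id A.obj.P.L) = (id : A.obj.P.L → A.obj.P.L) := rfl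
      rw [h1, rAdj_id]
      rfl
    apply Quiver.Hom.unop_inj
    exact InducedCategory.hom_ext (Subtype.ext hc)
  map_comp {A B C} f g := by
    have hc : (f ≫ g : A ⟶ C).hom.2.choose = (f.hom.2.choose).comp (g.hom.2.choose) := by
      apply rAdj_inj
      rw [← (f ≫ g : A ⟶ C).hom.2.choose_spec.2.2,
        rAdj_comp (g.hom.2.choose) (f.hom.2.choose)]
      show g.hom.1 ∘ f.hom.1 = rAdj ⇑(g.hom.2.choose) ∘ rAdj ⇑(f.hom.2.choose)
      rw [← f.hom.2.choose_spec.2.2, ← g.hom.2.choose_spec.2.2]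
    apply Quiver.Hom.unop_inj
    exact InducedCategory.hom_ext (Subtype.ext hc)

/-- From (opposite) frame homomorphisms to localic maps. -/
noncomputable def Kfun : (SpFrmS.{u})ᵒᵖ ⥤ SpLocS.{u} where
  obj X := ⟨⟨X.unop.obj.P⟩, X.unop.property⟩
  map {X Y} φ := ⟨⟨rAdj ⇑(φ.unop.hom.1), φ.unop.hom.1, φ.unop.hom.2.1, φ.unop.hom.2.2, rfl⟩⟩
  map_id X := by
    apply InducedCategory.hom_ext
    apply Subtype.ext
    show rAdj ⇑((𝟙 X.unop : X.unop ⟶ X.unop).hom.1) = id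
    have h1 : ⇑((𝟙 X.unop : X.unop ⟶ X.unop).hom.1) =
        (id : X.unop.obj.P.L → X.unop.obj.P.L) := rfl
    rw [h1, rAdj_id]
  map_comp {X Y Z} φ ψ := by
    apply InducedCategory.hom_ext
    apply Subtype.ext
    show rAdj ⇑((φ ≫ ψ).unop.hom.1) = rAdj ⇑(ψ.unop.hom.1) ∘ rAdj ⇑(φ.unop.hom.1)
    rw [show (φ ≫ ψ).unop.hom.1 = (φ.unop.hom.1).comp (ψ.unop.hom.1) from rfl]
    exact rAdj_comp (ψ.unop.hom.1) (φ.unop.hom.1)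

/-- The unit of the second equivalence. -/
noncomputable def unitIsoLoc : 𝟭 SpLocS.{u} ≅ Jfun ⋙ Kfun :=
  NatIso.ofComponents (fun A => Iso.refl _) (fun {A B} g => by
    apply InducedCategory.hom_ext
    apply Subtype.ext
    show g.hom.1 = rAdj ⇑(g.hom.2.choose)
    exact g.hom.2.choose_spec.2.2)

/-- The counit of the second equivalence. -/
noncomputable def counitIsoLoc : Kfun ⋙ Jfun ≅ 𝟭 (SpFrmS.{u})ᵒᵖ :=
  NatIso.ofComponents (fun X => Iso.refl _) (fun {X Y} φ => by
    have hc : (Kfun.map φ).hom.2.choose = φ.unop.hom.1 :=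
      rAdj_inj (((Kfun.map φ).hom.2.choose_spec.2.2).symm)
    have h2 : Jfun.map (Kfun.map φ) = φ := by
      apply Quiver.Hom.unop_inj
      exact InducedCategory.hom_ext (Subtype.ext hc)
    simp only [Functor.comp_map, Functor.id_map, Iso.refl_hom,
      Category.comp_id, Category.id_comp, h2]
    exact (Category.comp_id φ).trans (Category.id_comp φ).symm)

/-- The equivalence between spatial frames with special localic maps and the
opposite category of spatial frames with dominating compatible homomorphisms. -/
noncomputable def eqSpLocSpFrm : SpLocS.{u} ≌ (SpFrmS.{u})ᵒᵖ :=
  CategoryTheory.Equivalence.mk Jfun Kfun unitIsoLoc counitIsoLoc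

/-- **A Stone-type duality**: the categories `SobLSS`, `SpLocS` and
`SpFrmS^op` are all equivalent. -/
theorem stone_type_duality :
    Nonempty (SobLSS.{u} ≌ SpLocS.{u}) ∧
    Nonempty (SpLocS.{u} ≌ (SpFrmS.{u})ᵒᵖ) ∧
    Nonempty (SobLSS.{u} ≌ (SpFrmS.{u})ᵒᵖ) := by
  exact ⟨⟨eqSobSpLoc.{u}⟩, ⟨eqSpLocSpFrm.{u}⟩, ⟨eqSobSpLoc.{u}.trans eqSpLocSpFrm.{u}⟩⟩
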